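/- Let R, u^t, u^θ : (p₁,p₂) × (t₁,t₂) → ℝ be smooth functions with R > 0 everywhere, satisfying at every point the two equations u^t·∂u^t/∂t − R·(∂R/∂t)·(u^θ)² = 0 and ∂u^θ/∂t + (2/R)(∂R/∂t)·u^θ = 0. Then there exists a smooth function d : (p₁,p₂) → ℝ such that (u^t)² + R²·(u^θ)² = d(p) for all (p,t); that is, for an axisymmetric Gavrilov flow all particles living on one isobaric surface move with the same speed. -/

import Mathlib

/-- Partial derivative in the second variable of a function of two real variables. -/
noncomputable def pdt (F : ℝ → ℝ → ℝ) (p t : ℝ) : ℝ := deriv (fun s => F p s) t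

/-- if `R, u^t, u^θ` are smooth on `(p₁,p₂)×(t₁,t₂)` with `R > 0` and satisfy
the geodesic equations `u^t ∂u^t/∂t − R R'_t (u^θ)² = 0` and
`∂u^θ/∂t + (2R'_t/R) u^θ = 0`, then the squared speed `(u^t)² + R²(u^θ)²` depends only
on `p`: there is a smooth `d(p)` with `(u^t)² + R²(u^θ)² = d(p)`. -/
theorem speed_depends_only_on_pressure (p₁ p₂ t₁ t₂ : ℝ) (R ut uθ : ℝ → ℝ → ℝ)
    (hR : ContDiffOn ℝ (⊤ : ℕ∞) (fun v : ℝ × ℝ => R v.1 v.2)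
      (Set.Ioo p₁ p₂ ×ˢ Set.Ioo t₁ t₂))
    (hut : ContDiffOn ℝ (⊤ : ℕ∞) (fun v : ℝ × ℝ => ut v.1 v.2)
      (Set.Ioo p₁ p₂ ×ˢ Set.Ioo t₁ t₂))
    (huθ : ContDiffOn ℝ (⊤ : ℕ∞) (fun v : ℝ × ℝ => uθ v.1 v.2)
      (Set.Ioo p₁ p₂ ×ˢ Set.Ioo t₁ t₂))
    (hRpos : ∀ p ∈ Set.Ioo p₁ p₂, ∀ t ∈ Set.Ioo t₁ t₂, 0 < R p t)
    (heq1 : ∀ p ∈ Set.Ioo p₁ p₂, ∀ t ∈ Set.Ioo t₁ t₂,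
      ut p t * pdt ut p t - R p t * pdt R p t * (uθ p t) ^ 2 = 0)
    (heq2 : ∀ p ∈ Set.Ioo p₁ p₂, ∀ t ∈ Set.Ioo t₁ t₂,
      pdt uθ p t + (2 / R p t) * pdt R p t * uθ p t = 0) :
    ∃ d : ℝ → ℝ, ContDiffOn ℝ (⊤ : ℕ∞) d (Set.Ioo p₁ p₂) ∧
      ∀ p ∈ Set.Ioo p₁ p₂, ∀ t ∈ Set.Ioo t₁ t₂,
        (ut p t) ^ 2 + (R p t) ^ 2 * (uθ p t) ^ 2 = d p := by
  by_cases ht : t₁ < t₂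
  · set t₀ : ℝ := (t₁ + t₂) / 2 with ht₀def
    have ht₀ : t₀ ∈ Set.Ioo t₁ t₂ := ⟨by linarith, by linarith⟩
    set S : Set (ℝ × ℝ) := Set.Ioo p₁ p₂ ×ˢ Set.Ioo t₁ t₂ with hS
    have hSopen : IsOpen S := (isOpen_Ioo).prod isOpen_Ioo
    -- Each slice function is differentiable at points of the product
    have slice : ∀ (F : ℝ → ℝ → ℝ),
        ContDiffOn ℝ (⊤ : ℕ∞) (fun v : ℝ × ℝ => F v.1 v.2) S →
        ∀ p ∈ Set.Ioo p₁ p₂, ∀ t ∈ Set.Ioo t₁ t₂,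
        DifferentiableAt ℝ (fun s => F p s) t := by
      intro F hF p hp t htt
      have hmem : (p, t) ∈ S := ⟨hp, htt⟩
      have hFd : DifferentiableAt ℝ (fun v : ℝ × ℝ => F v.1 v.2) (p, t) :=
        (hF.differentiableOn (by simp)).differentiableAt (hSopen.mem_nhds hmem)
      have : DifferentiableAt ℝ ((fun v : ℝ × ℝ => F v.1 v.2) ∘ (fun s => ((p, s) : ℝ × ℝ))) t :=
        hFd.comp t (DifferentiableAt.prodMk (differentiableAt_const p) differentiableAt_id)
      exact this
    -- Constancy in t for fixed p
    have key : ∀ p ∈ Set.Ioo p₁ p₂, ∀ t ∈ Set.Ioo t₁ t₂,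
        (ut p t) ^ 2 + (R p t) ^ 2 * (uθ p t) ^ 2
          = (ut p t₀) ^ 2 + (R p t₀) ^ 2 * (uθ p t₀) ^ 2 := by
      intro p hp t htt
      set E : ℝ → ℝ := fun s => (ut p s) ^ 2 + (R p s) ^ 2 * (uθ p s) ^ 2 with hE
      have hEdiff : DifferentiableOn ℝ E (Set.Ioo t₁ t₂) := by
        intro s hs
        exact (((((slice ut hut p hp s hs).pow 2).add
          (((slice R hR p hp s hs).pow 2).mul ((slice uθ huθ p hp s hs).pow 2)))).differentiableWithinAt)
      have hderiv0 : ∀ s ∈ Set.Ioo t₁ t₂, HasDerivAt E 0 s := by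
        intro s hs
        have hRd := (slice R hR p hp s hs).hasDerivAt
        have hutd := (slice ut hut p hp s hs).hasDerivAt
        have huθd := (slice uθ huθ p hp s hs).hasDerivAt
        have h1 := heq1 p hp s hs
        have h2 := heq2 p hp s hs
        have hRne : R p s ≠ 0 := (hRpos p hp s hs).ne'
        have h2' : R p s * pdt uθ p s + 2 * pdt R p s * uθ p s = 0 := by
          field_simp at h2; linarith
        have : HasDerivAt E
            (2 * pdt ut p s * ut p s +
              (2 * pdt R p s * R p s * (uθ p s) ^ 2 +
                (R p s) ^ 2 * (2 * pdt uθ p s * uθ p s))) s := by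
          have := ((hutd.pow 2).add (((hRd.pow 2)).mul (huθd.pow 2)))
          exact this.congr_deriv (by simp only [pdt, Pi.pow_apply, Nat.add_one_sub_one, pow_one]; push_cast; ring)
        convert this using 1
        linear_combination -2*h1 - 2*R p s*uθ p s*h2'
      have hfd : ∀ s ∈ Set.Ioo t₁ t₂, fderivWithin ℝ E (Set.Ioo t₁ t₂) s = 0 := by
        intro s hs
        have : HasFDerivWithinAt E (0 : ℝ →L[ℝ] ℝ) (Set.Ioo t₁ t₂) s := by
          have h := ((hderiv0 s hs).hasFDerivAt.hasFDerivWithinAt :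
            HasFDerivWithinAt E _ (Set.Ioo t₁ t₂) s)
          have hz : (ContinuousLinearMap.toSpanSingleton ℝ (0:ℝ)) = 0 := by
            ext; simp
          rwa [hz] at h
        exact this.fderivWithin ((isOpen_Ioo).uniqueDiffOn s hs)
      exact (convex_Ioo t₁ t₂).is_const_of_fderivWithin_eq_zero hEdiff hfd htt ht₀
    refine ⟨fun p => (ut p t₀) ^ 2 + (R p t₀) ^ 2 * (uθ p t₀) ^ 2, ?_, ?_⟩
    · have hmap : Set.MapsTo (fun p : ℝ => ((p, t₀) : ℝ × ℝ)) (Set.Ioo p₁ p₂) S := by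
        intro p hp; exact ⟨hp, ht₀⟩
      have hincl : ContDiffOn ℝ (⊤ : ℕ∞) (fun p : ℝ => ((p, t₀) : ℝ × ℝ)) (Set.Ioo p₁ p₂) :=
        (ContDiff.prodMk contDiff_id contDiff_const).contDiffOn
      have h1 : ContDiffOn ℝ (⊤ : ℕ∞) (fun p => ut p t₀) (Set.Ioo p₁ p₂) :=
        hut.comp hincl hmap
      have h2 : ContDiffOn ℝ (⊤ : ℕ∞) (fun p => R p t₀) (Set.Ioo p₁ p₂) :=
        hR.comp hincl hmap
      have h3 : ContDiffOn ℝ (⊤ : ℕ∞) (fun p => uθ p t₀) (Set.Ioo p₁ p₂) :=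
        huθ.comp hincl hmap
      exact (h1.pow 2).add ((h2.pow 2).mul (h3.pow 2))
    · intro p hp t htt
      exact key p hp t htt
  · refine ⟨fun _ => 0, contDiffOn_const, ?_⟩
    intro p hp t htt
    exact absurd (htt.1.trans htt.2) ht
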